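/- Let g : [u̅, u̅₁] → ℝ satisfy |g(u̅₁)| ≤ A r(u̅₁)^{-4} and the backward differential inequality |g'(x)| ≤ k r(x)^{-2} |g(x)| + c₁ r(x)^{-2} |g(x)|^{3/2} + c₂ r(x)^{-2} |g(x)|², where C⁻¹(1+x) ≤ r(x) ≤ C(1+x) and r(x) ≥ 1. Then, provided r(u̅₁) is sufficiently large (depending on A, k, c₁, c₂, C), one has |r(x)² g(x)| ≤ C' A r(u̅₁)^{-2} for all x ∈ [u̅, u̅₁], with C' depending only on k, c₁, c₂, C. -/

import Mathlib

open Set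

lemma gron18 (k c₁ c₂ C : ℝ) (hk : 0 ≤ k) (hc₁ : 0 ≤ c₁) (hc₂ : 0 ≤ c₂) (hC : 0 < C)
    (ub ub₁ : ℝ) (hle : ub ≤ ub₁) (g g' r : ℝ → ℝ)
    (hr1 : ∀ x ∈ Set.Icc ub ub₁, 1 ≤ r x)
    (hrC : ∀ x ∈ Set.Icc ub ub₁, C⁻¹ * (1 + x) ≤ r x ∧ r x ≤ C * (1 + x))
    (hg : ∀ x ∈ Set.Icc ub ub₁, HasDerivAt g (g' x) x)
    (hg' : ∀ x ∈ Set.Icc ub ub₁,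
      |g' x| ≤ k * (r x ^ 2)⁻¹ * |g x| + c₁ * (r x ^ 2)⁻¹ * |g x| ^ ((3:ℝ)/2)
        + c₂ * (r x ^ 2)⁻¹ * |g x| ^ 2)
    (x₀ : ℝ) (hx₀ : x₀ ∈ Set.Icc ub ub₁)
    (hsm : ∀ y ∈ Set.Icc x₀ ub₁, g y ^ 2 ≤ 1) :
    ∀ y ∈ Set.Icc x₀ ub₁, g y ^ 2 ≤ g ub₁ ^ 2 * Real.exp (2 * (k + c₁ + c₂) * C ^ 3) := by
  set K := k + c₁ + c₂ with hKdef
  have hKn : 0 ≤ K := by positivity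
  have hsub : Icc x₀ ub₁ ⊆ Icc ub ub₁ := Icc_subset_Icc hx₀.1 le_rfl
  have hy0 : ∀ y ∈ Icc ub ub₁, C⁻¹ ≤ 1 + y := by
    intro y hy
    have h1 := hr1 y hy
    have h2 := (hrC y hy).2
    have h3 : 1 ≤ C * (1 + y) := le_trans h1 h2
    have h4 := mul_le_mul_of_nonneg_left h3 (le_of_lt (inv_pos.mpr hC))
    calc C⁻¹ = C⁻¹ * 1 := by ring
      _ ≤ C⁻¹ * (C * (1 + y)) := h4
      _ = 1 + y := by field_simp
  have hypos : ∀ y ∈ Icc ub ub₁, 0 < 1 + y := fun y hy =>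
    lt_of_lt_of_le (inv_pos.mpr hC) (hy0 y hy)
  set Φ : ℝ → ℝ := fun y => -(C ^ 2 * (1 + y)⁻¹) with hΦdef
  set F : ℝ → ℝ := fun y => g y ^ 2 * Real.exp (2 * K * Φ y) with hFdef
  set F' : ℝ → ℝ := fun y => 2 * g y * g' y * Real.exp (2 * K * Φ y)
    + g y ^ 2 * (Real.exp (2 * K * Φ y) * (2 * K * (C ^ 2 * ((1 + y) ^ 2)⁻¹))) with hF'def
  have hF : ∀ y ∈ Icc ub ub₁, HasDerivAt F (F' y) y := by
    intro y hy
    have hne : (1 : ℝ) + y ≠ 0 := (hypos y hy).ne'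
    have h1 : HasDerivAt (fun z : ℝ => 1 + z) 1 y := by
      simpa using (hasDerivAt_id y).const_add 1
    have h2 : HasDerivAt (fun z : ℝ => (1 + z)⁻¹) (-1 / (1 + y) ^ 2) y := by
      exact h1.inv hne
    have h3 : HasDerivAt Φ (C ^ 2 * ((1 + y) ^ 2)⁻¹) y := by
      have h3' := (h2.const_mul (C ^ 2)).neg
      have : -(C ^ 2 * (-1 / (1 + y) ^ 2)) = C ^ 2 * ((1 + y) ^ 2)⁻¹ := by
        field_simp
      rw [← this]
      exact h3'
    have h4 : HasDerivAt (fun z => Real.exp (2 * K * Φ z))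
        (Real.exp (2 * K * Φ y) * (2 * K * (C ^ 2 * ((1 + y) ^ 2)⁻¹))) y :=
      (h3.const_mul (2 * K)).exp
    have h5 : HasDerivAt (fun z => g z ^ 2) (2 * g y * g' y) y := by
      simpa using (hg y hy).fun_pow 2
    exact h5.mul h4
  have hmono : MonotoneOn F (Icc x₀ ub₁) := by
    apply monotoneOn_of_deriv_nonneg (convex_Icc _ _)
    · exact fun y hy => ((hF y (hsub hy)).continuousAt).continuousWithinAt
    · intro y hy
      rw [interior_Icc] at hy
      exact ((hF y (hsub (Ioo_subset_Icc_self hy))).differentiableAt).differentiableWithinAt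
    · intro y hy
      rw [interior_Icc] at hy
      have hyI : y ∈ Icc x₀ ub₁ := Ioo_subset_Icc_self hy
      have hyU : y ∈ Icc ub ub₁ := hsub hyI
      rw [(hF y hyU).deriv]
      -- prove 0 ≤ F' y
      have hgy1 : |g y| ≤ 1 := by
        have h1 := hsm y hyI
        have h2 := abs_nonneg (g y)
        nlinarith [sq_abs (g y)]
      have hr := hr1 y hyU
      have hposy : 0 < 1 + y := hypos y hyU
      have hrlow := (hrC y hyU).1
      have hinv : (r y ^ 2)⁻¹ ≤ C ^ 2 * ((1 + y) ^ 2)⁻¹ := by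
        have hpos2 : 0 < C⁻¹ * (1 + y) := by positivity
        have hsq : (C⁻¹ * (1 + y)) ^ 2 ≤ r y ^ 2 := by
          apply pow_le_pow_left₀ hpos2.le hrlow
        have h6 := inv_anti₀ (by positivity : (0:ℝ) < (C⁻¹ * (1 + y)) ^ 2) hsq
        calc (r y ^ 2)⁻¹ ≤ ((C⁻¹ * (1 + y)) ^ 2)⁻¹ := h6
          _ = C ^ 2 * ((1 + y) ^ 2)⁻¹ := by
            rw [mul_pow, mul_inv, inv_pow, inv_inv]
      have hw : (0:ℝ) ≤ (r y ^ 2)⁻¹ := by positivity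
      have hrpow : |g y| ^ ((3:ℝ)/2) ≤ |g y| := by
        rcases eq_or_lt_of_le (abs_nonneg (g y)) with h0 | h0
        · rw [← h0, Real.zero_rpow (by norm_num : ((3:ℝ)/2) ≠ 0)]
        · calc |g y| ^ ((3:ℝ)/2) ≤ |g y| ^ (1:ℝ) :=
              Real.rpow_le_rpow_of_exponent_ge h0 hgy1 (by norm_num)
            _ = |g y| := Real.rpow_one _
      have hsq' : |g y| ^ 2 ≤ |g y| := by nlinarith [abs_nonneg (g y)]
      have hg'bound : |g' y| ≤ K * (r y ^ 2)⁻¹ * |g y| := by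
        have h7 := hg' y hyU
        have h8 : c₁ * (r y ^ 2)⁻¹ * |g y| ^ ((3:ℝ)/2) ≤ c₁ * (r y ^ 2)⁻¹ * |g y| :=
          mul_le_mul_of_nonneg_left hrpow (mul_nonneg hc₁ hw)
        have h9 : c₂ * (r y ^ 2)⁻¹ * |g y| ^ 2 ≤ c₂ * (r y ^ 2)⁻¹ * |g y| :=
          mul_le_mul_of_nonneg_left hsq' (mul_nonneg hc₂ hw)
        rw [hKdef]
        nlinarith
      have hgg' : |g y * g' y| ≤ K * (r y ^ 2)⁻¹ * g y ^ 2 := by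
        rw [abs_mul]
        calc |g y| * |g' y| ≤ |g y| * (K * (r y ^ 2)⁻¹ * |g y|) :=
            mul_le_mul_of_nonneg_left hg'bound (abs_nonneg _)
          _ = K * (r y ^ 2)⁻¹ * |g y| ^ 2 := by ring
          _ = K * (r y ^ 2)⁻¹ * g y ^ 2 := by rw [sq_abs]
      have h2' : K * (r y ^ 2)⁻¹ * g y ^ 2 ≤ K * (C ^ 2 * ((1 + y) ^ 2)⁻¹) * g y ^ 2 :=
        mul_le_mul_of_nonneg_right (mul_le_mul_of_nonneg_left hinv hKn) (sq_nonneg _)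
      have hcomb : 0 ≤ g y * g' y + K * (C ^ 2 * ((1 + y) ^ 2)⁻¹) * g y ^ 2 := by
        have := neg_abs_le (g y * g' y)
        linarith
      have hexp : (0:ℝ) < Real.exp (2 * K * Φ y) := Real.exp_pos _
      have hfin : (0:ℝ) ≤ Real.exp (2 * K * Φ y)
          * (2 * (g y * g' y + K * (C ^ 2 * ((1 + y) ^ 2)⁻¹) * g y ^ 2)) :=
        mul_nonneg hexp.le (by linarith)
      have heq : F' y = Real.exp (2 * K * Φ y)
          * (2 * (g y * g' y + K * (C ^ 2 * ((1 + y) ^ 2)⁻¹) * g y ^ 2)) := by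
        simp only [hF'def]; ring
      rw [heq]
      exact hfin
  intro y hy
  have hub₁I : ub₁ ∈ Icc x₀ ub₁ := ⟨hx₀.2, le_rfl⟩
  have hFle : F y ≤ F ub₁ := hmono hy hub₁I hy.2
  have hEy : (0:ℝ) < Real.exp (2 * K * Φ y) := Real.exp_pos _
  have key2 : g y ^ 2 ≤ g ub₁ ^ 2 * Real.exp (2 * K * Φ ub₁ - 2 * K * Φ y) := by
    have h := hFle
    simp only [hFdef] at h
    calc g y ^ 2 = g y ^ 2 * Real.exp (2 * K * Φ y) * (Real.exp (2 * K * Φ y))⁻¹ := by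
          field_simp
      _ ≤ g ub₁ ^ 2 * Real.exp (2 * K * Φ ub₁) * (Real.exp (2 * K * Φ y))⁻¹ :=
          mul_le_mul_of_nonneg_right h (by positivity)
      _ = g ub₁ ^ 2 * Real.exp (2 * K * Φ ub₁ - 2 * K * Φ y) := by
          rw [Real.exp_sub]; field_simp
  have hyU := hsub hy
  have hub₁U : ub₁ ∈ Icc ub ub₁ := ⟨hle, le_rfl⟩
  have h1 : (1 + y)⁻¹ ≤ C := by
    have := inv_anti₀ (inv_pos.mpr hC) (hy0 y hyU)
    rwa [inv_inv] at this
  have h2 : (0:ℝ) ≤ (1 + ub₁)⁻¹ := by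
    have := hypos ub₁ hub₁U; positivity
  have hexpo : 2 * K * Φ ub₁ - 2 * K * Φ y ≤ 2 * K * C ^ 3 := by
    have h3 : Φ ub₁ - Φ y ≤ C ^ 3 := by
      simp only [hΦdef]
      have h4 : C ^ 2 * (1 + y)⁻¹ ≤ C ^ 2 * C := mul_le_mul_of_nonneg_left h1 (sq_nonneg C)
      have h5 : 0 ≤ C ^ 2 * (1 + ub₁)⁻¹ := mul_nonneg (sq_nonneg C) h2
      nlinarith
    nlinarith
  calc g y ^ 2 ≤ g ub₁ ^ 2 * Real.exp (2 * K * Φ ub₁ - 2 * K * Φ y) := key2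
    _ ≤ g ub₁ ^ 2 * Real.exp (2 * K * C ^ 3) :=
        mul_le_mul_of_nonneg_left (Real.exp_le_exp.mpr hexpo) (sq_nonneg _)

set_option maxHeartbeats 1000000 in
/-- Bootstrap estimate for `g = g(L'₁, L₂)`: the backward transport
inequality with linear, `3/2`-power and quadratic terms carrying `r⁻²`
weights propagates the smallness `|g(u̅₁)| ≤ A r(u̅₁)⁻⁴` backwards, giving
`|r² g| ≤ C' A r(u̅₁)⁻²` provided `r(u̅₁)` is large enough; `C'` depends
only on `k, c₁, c₂, C`. -/
theorem stmt18 (k c₁ c₂ C : ℝ) (hk : 0 ≤ k) (hc₁ : 0 ≤ c₁) (hc₂ : 0 ≤ c₂)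
    (hC : 0 < C) :
    ∃ C' : ℝ, 0 < C' ∧ ∀ A : ℝ, 0 ≤ A →
      ∃ R₀ : ℝ, 0 < R₀ ∧
        ∀ (ub ub₁ : ℝ) (g g' r : ℝ → ℝ), ub ≤ ub₁ →
          (∀ x ∈ Set.Icc ub ub₁, 1 ≤ r x) →
          (∀ x ∈ Set.Icc ub ub₁, C⁻¹ * (1 + x) ≤ r x ∧ r x ≤ C * (1 + x)) →
          |g ub₁| ≤ A * (r ub₁ ^ 4)⁻¹ →
          (∀ x ∈ Set.Icc ub ub₁, HasDerivAt g (g' x) x) →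
          (∀ x ∈ Set.Icc ub ub₁,
            |g' x| ≤ k * (r x ^ 2)⁻¹ * |g x|
              + c₁ * (r x ^ 2)⁻¹ * |g x| ^ ((3:ℝ) / 2)
              + c₂ * (r x ^ 2)⁻¹ * |g x| ^ 2) →
          R₀ ≤ r ub₁ →
          ∀ x ∈ Set.Icc ub ub₁, |r x ^ 2 * g x| ≤ C' * A * (r ub₁ ^ 2)⁻¹ := by
  classical
  set E := Real.exp ((k + c₁ + c₂) * C ^ 3) with hEdef
  have hEpos : 0 < E := Real.exp_pos _
  have hE1 : 1 ≤ E := Real.one_le_exp (by positivity)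
  refine ⟨C ^ 4 * E, by positivity, fun A hA => ⟨1 + 2 * A * E, by positivity, ?_⟩⟩
  intro ub ub₁ g g' r hle hr1 hrC hinit hg hg' hR x hx
  have hub₁ : ub₁ ∈ Set.Icc ub ub₁ := ⟨hle, le_rfl⟩
  have hrub₁1 : 1 ≤ r ub₁ := hr1 ub₁ hub₁
  have hrub₁pos : 0 < r ub₁ := lt_of_lt_of_le one_pos hrub₁1
  have hRpos : (0:ℝ) < 1 + 2 * A * E := by positivity
  have h4 : 1 + 2 * A * E ≤ r ub₁ ^ 4 := by
    refine le_trans hR ?_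
    calc r ub₁ = r ub₁ ^ 1 := (pow_one _).symm
      _ ≤ r ub₁ ^ 4 := pow_le_pow_right₀ hrub₁1 (by norm_num)
  have hgub₁ : |g ub₁| * E ≤ 1 / 2 := by
    have h5 : |g ub₁| ≤ A / (1 + 2 * A * E) := by
      calc |g ub₁| ≤ A * (r ub₁ ^ 4)⁻¹ := hinit
        _ ≤ A * (1 + 2 * A * E)⁻¹ :=
            mul_le_mul_of_nonneg_left (inv_anti₀ hRpos h4) hA
        _ = A / (1 + 2 * A * E) := by rw [div_eq_mul_inv]
    have h6 : A * E / (1 + 2 * A * E) ≤ 1 / 2 := by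
      rw [div_le_div_iff₀ hRpos (by norm_num : (0:ℝ) < 2)]
      nlinarith
    calc |g ub₁| * E ≤ (A / (1 + 2 * A * E)) * E :=
        mul_le_mul_of_nonneg_right h5 hEpos.le
      _ = A * E / (1 + 2 * A * E) := by ring
      _ ≤ 1 / 2 := h6
  have hgub₁' : |g ub₁| ≤ 1 / 2 := by nlinarith [abs_nonneg (g ub₁)]
  have hg1 : g ub₁ ^ 2 ≤ 1 := by
    nlinarith [sq_abs (g ub₁), mul_le_mul hgub₁' hgub₁' (abs_nonneg (g ub₁))
      (by norm_num : (0:ℝ) ≤ 1/2)]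
  -- Grönwall step
  have key : ∀ x₀ ∈ Set.Icc ub ub₁, (∀ y ∈ Set.Icc x₀ ub₁, g y ^ 2 ≤ 1) →
      ∀ y ∈ Set.Icc x₀ ub₁, g y ^ 2 ≤ g ub₁ ^ 2 * (E * E) := by
    intro x₀ hx₀ hsm y hy
    have := gron18 k c₁ c₂ C hk hc₁ hc₂ hC ub ub₁ hle g g' r hr1 hrC hg hg' x₀ hx₀ hsm y hy
    have hEE : Real.exp (2 * (k + c₁ + c₂) * C ^ 3) = E * E := by
      rw [hEdef, ← Real.exp_add]; ring_nf
    rwa [hEE] at this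
  have hq : g ub₁ ^ 2 * (E * E) ≤ 1 / 4 := by
    have h := mul_le_mul hgub₁ hgub₁
      (mul_nonneg (abs_nonneg (g ub₁)) hEpos.le) (by norm_num : (0:ℝ) ≤ 1/2)
    calc g ub₁ ^ 2 * (E * E) = (|g ub₁| * E) * (|g ub₁| * E) := by
          rw [← sq_abs (g ub₁)]; ring
      _ ≤ (1/2) * (1/2) := h
      _ = 1/4 := by norm_num
  have hcont : ∀ y ∈ Set.Icc ub ub₁, ContinuousAt g y := fun y hy => (hg y hy).continuousAt
  -- bootstrap via sInf
  set S : Set ℝ := {t | t ∈ Set.Icc ub ub₁ ∧ ∀ y ∈ Set.Icc t ub₁, g y ^ 2 ≤ 1} with hSdef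
  have hub₁S : ub₁ ∈ S := by
    refine ⟨hub₁, fun y hy => ?_⟩
    have hyeq : y = ub₁ := le_antisymm hy.2 hy.1
    subst hyeq
    exact hg1
  have hSne : S.Nonempty := ⟨ub₁, hub₁S⟩
  have hSbdd : BddBelow S := ⟨ub, fun t ht => ht.1.1⟩
  set m := sInf S with hmdef
  have hmub : ub ≤ m := le_csInf hSne fun t ht => ht.1.1
  have hmub₁ : m ≤ ub₁ := csInf_le hSbdd hub₁S
  have hmI : m ∈ Set.Icc ub ub₁ := ⟨hmub, hmub₁⟩
  have hmS : ∀ y ∈ Set.Icc m ub₁, g y ^ 2 ≤ 1 := by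
    intro y hy
    rcases eq_or_lt_of_le hy.1 with heq | hlt
    · -- y = m
      rcases eq_or_lt_of_le hy.2 with heq2 | hlt2
      · subst heq2
        exact hg1
      · -- m = y < ub₁, take limit from the right
        have hyI : y ∈ Set.Icc ub ub₁ := ⟨le_trans hmub hy.1, hy.2⟩
        have hIoo : ∀ z ∈ Set.Ioo y ub₁, g z ^ 2 ≤ 1 := by
          intro z hz
          obtain ⟨t, htS, htz⟩ := exists_lt_of_csInf_lt hSne (show sInf S < z by rw [← hmdef, heq]; exact hz.1)
          exact htS.2 z ⟨htz.le, hz.2.le⟩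
        have htend : Filter.Tendsto (fun z => g z ^ 2) (nhdsWithin y (Set.Ioi y))
            (nhds (g y ^ 2)) :=
          (((hcont y hyI).pow 2).tendsto).mono_left nhdsWithin_le_nhds
        refine le_of_tendsto htend ?_
        filter_upwards [Ioo_mem_nhdsGT_of_mem ⟨le_refl y, hlt2⟩] with z hz
        exact hIoo z hz
    · -- m < y
      obtain ⟨t, htS, ht⟩ := exists_lt_of_csInf_lt hSne hlt
      exact htS.2 y ⟨ht.le, hy.2⟩
  have hmeq : m = ub := by
    by_contra hne
    have hltm : ub < m := lt_of_le_of_ne hmub (Ne.symm hne)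
    have h14 : g m ^ 2 ≤ 1 / 4 :=
      le_trans (key m hmI hmS m ⟨le_rfl, hmub₁⟩) hq
    have hev : ∀ᶠ z in nhds m, g z ^ 2 ≤ 1 := by
      have hcm : ContinuousAt (fun z => g z ^ 2) m := (hcont m hmI).pow 2
      have hlt1 : (fun z => g z ^ 2) m < 1 := by show g m ^ 2 < 1; linarith
      have : {z | g z ^ 2 < 1} ∈ nhds m := hcm (Iio_mem_nhds hlt1)
      filter_upwards [this] with z hz using hz.le
    obtain ⟨δ, hδ, hball⟩ := Metric.eventually_nhds_iff.mp hev
    set x' := max ub (m - δ / 2) with hx'def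
    have hx'lt : x' < m := max_lt hltm (by linarith)
    have hx'I : x' ∈ Set.Icc ub ub₁ := ⟨le_max_left _ _, max_le hle (by linarith)⟩
    have hx'S : x' ∈ S := by
      refine ⟨hx'I, fun y hy => ?_⟩
      by_cases hym : m ≤ y
      · exact hmS y ⟨hym, hy.2⟩
      · push_neg at hym
        apply hball
        rw [Real.dist_eq, abs_of_nonpos (by linarith)]
        have : m - δ / 2 ≤ x' := le_max_right _ _
        have : m - δ / 2 ≤ y := le_trans this hy.1
        linarith
    exact absurd (csInf_le hSbdd hx'S) (not_le.mpr hx'lt)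
  have hall : ∀ y ∈ Set.Icc ub ub₁, g y ^ 2 ≤ 1 := hmeq ▸ hmS
  have hb := key ub ⟨le_rfl, hle⟩ hall x hx
  -- conclude
  have hgx : |g x| ≤ |g ub₁| * E := by
    nlinarith [sq_abs (g x), sq_abs (g ub₁), abs_nonneg (g x), abs_nonneg (g ub₁),
      mul_nonneg (abs_nonneg (g ub₁)) hEpos.le,
      sq_nonneg (|g x| - |g ub₁| * E), sq_nonneg (|g x| + |g ub₁| * E)]
  have hxpos : 0 < 1 + x := by
    have h1 := hr1 x hx
    have h2 := (hrC x hx).2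
    nlinarith
  have hrx : r x ≤ C ^ 2 * r ub₁ := by
    have h2 := (hrC x hx).2
    have h3 := (hrC ub₁ hub₁).1
    have h5 : 1 + x ≤ 1 + ub₁ := by linarith [hx.2]
    have h6 : C⁻¹ * (1 + ub₁) ≤ r ub₁ := h3
    have h7 : C * (1 + ub₁) ≤ C * (C * r ub₁) := by
      have := mul_le_mul_of_nonneg_left h6 (le_of_lt hC)
      have hcc : C * (C⁻¹ * (1 + ub₁)) = 1 + ub₁ := by field_simp
      nlinarith
    calc r x ≤ C * (1 + x) := h2
      _ ≤ C * (1 + ub₁) := by nlinarith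
      _ ≤ C ^ 2 * r ub₁ := by nlinarith
  have hrxpos : 0 < r x := lt_of_lt_of_le one_pos (hr1 x hx)
  have hrx2 : r x ^ 2 ≤ C ^ 4 * r ub₁ ^ 2 := by nlinarith
  have habs : |r x ^ 2 * g x| = r x ^ 2 * |g x| := by
    rw [abs_mul, abs_of_nonneg (sq_nonneg (r x))]
  rw [habs]
  have hgub : |g ub₁| * E ≤ A * (r ub₁ ^ 4)⁻¹ * E :=
    mul_le_mul_of_nonneg_right hinit hEpos.le
  calc r x ^ 2 * |g x| ≤ (C ^ 4 * r ub₁ ^ 2) * (A * (r ub₁ ^ 4)⁻¹ * E) := by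
        apply mul_le_mul hrx2 (le_trans hgx hgub) (abs_nonneg _) (by positivity)
    _ = C ^ 4 * E * A * (r ub₁ ^ 2)⁻¹ := by
        field_simp
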